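/- For any positive mass ratios μ_{i,j} = m_i/m_j (with m_1, m_2, m_3 > 0) and any A > 0, the symmetric 3×3 matrix (3A/4)·[[μ_{3,1} + μ_{3,2}, −1, −1], [−1, μ_{2,1} + μ_{2,3}, −1], [−1, −1, μ_{1,2} + μ_{1,3}]] has exactly one zero eigenvalue and two strictly positive eigenvalues. Consequently the Lagrange equilateral triangle central configurations are minima of f modulo the rotational symmetry. -/

import Mathlib

noncomputable section

open Finset

/-- A point in the Euclidean plane with the given coordinates. -/
def pt (a b : ℝ) : EuclideanSpace ℝ (Fin 2) := (WithLp.equiv 2 (Fin 2 → ℝ)).symm ![a, b]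

/-- The configuration space of `n` planar points, identified with `ℝ^{2n}`. -/
abbrev Conf (n : ℕ) := Fin n → EuclideanSpace ℝ (Fin 2)

/-- The twist vector `v_{i,j}`: its only nonzero components are
`(v_{i,j})_{x_i} = m_j (y_i - y_j)`, `(v_{i,j})_{y_i} = -m_j (x_i - x_j)`,
`(v_{i,j})_{x_j} = -m_i (y_i - y_j)`, `(v_{i,j})_{y_j} = m_i (x_i - x_j)`. -/
def twist {n : ℕ} (m : Fin n → ℝ) (q : Conf n) (i j : Fin n) : Conf n :=
  fun k =>
    if k = i then pt (m j * (q i 1 - q j 1)) (-(m j * (q i 0 - q j 0)))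
    else if k = j then pt (-(m i * (q i 1 - q j 1))) (m i * (q i 0 - q j 0))
    else 0

/-- The dot product on the configuration space `ℝ^{2n}`. -/
def dot {n : ℕ} (v w : Conf n) : ℝ := ∑ k, ∑ t, v k t * w k t

/-- Twice the signed area `Λ_{i,j,k}` of the triangle `q_i q_j q_k`. -/
def lam {n : ℕ} (q : Conf n) (i j k : Fin n) : ℝ :=
  (q i 0 - q j 0) * (q i 1 - q k 1) - (q i 0 - q k 0) * (q i 1 - q j 1)

/-- The moment of inertia about the center of mass. -/
def Ifun {n : ℕ} (m : Fin n → ℝ) (q : Conf n) : ℝ :=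
  ∑ i, m i * ‖q i - (∑ i, m i)⁻¹ • ∑ j, m j • q j‖ ^ 2

/-- The homogeneous potential `U = ∑_{i<j} m_i m_j r_{i,j}^{2-A}`. -/
def Ufun {n : ℕ} (A : ℝ) (m : Fin n → ℝ) (q : Conf n) : ℝ :=
  ∑ p ∈ Finset.univ.filter (fun p : Fin n × Fin n => p.1 < p.2),
    m p.1 * m p.2 * ‖q p.1 - q p.2‖ ^ (2 - A)

/-- `f = M I / 2 + U / (A - 2)`. -/
def fFun {n : ℕ} (A : ℝ) (m : Fin n → ℝ) (q : Conf n) : ℝ :=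
  (∑ i, m i) * Ifun m q / 2 + Ufun A m q / (A - 2)

/-- The Hessian of `f` at `q`, as a bilinear form: `v ᵀ H w`. -/
def hess {n : ℕ} (A : ℝ) (m : Fin n → ℝ) (q : Conf n) (v w : Conf n) : ℝ :=
  fderiv ℝ (fderiv ℝ (fFun A m)) q v w

set_option maxHeartbeats 1000000
lemma trace_eq_sum_eigs {n : Type*} [Fintype n] [DecidableEq n] {A : Matrix n n ℝ}
    (hA : A.IsHermitian) : A.trace = ∑ i, hA.eigenvalues i := by
  conv_lhs => rw [hA.spectral_theorem, Unitary.conjStarAlgAut_apply]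
  rw [Matrix.trace_mul_cycle,
    (Matrix.mem_unitaryGroup_iff').mp (hA.eigenvectorUnitary).2, Matrix.one_mul,
    Matrix.trace_diagonal]
  rfl

lemma trace_sq_eq_sum_sq_eigs {n : Type*} [Fintype n] [DecidableEq n] {A : Matrix n n ℝ}
    (hA : A.IsHermitian) : (A * A).trace = ∑ i, hA.eigenvalues i ^ 2 := by
  conv_lhs => rw [hA.spectral_theorem, Unitary.conjStarAlgAut_apply]
  rw [show ∀ U D : Matrix n n ℝ, (U * D * star U) * (U * D * star U)
        = U * (D * (star U * U) * D) * star U by intros; noncomm_ring]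
  rw [(Matrix.mem_unitaryGroup_iff').mp (hA.eigenvectorUnitary).2, Matrix.mul_one,
    Matrix.trace_mul_cycle,
    (Matrix.mem_unitaryGroup_iff').mp (hA.eigenvectorUnitary).2, Matrix.one_mul]
  simp [Matrix.diagonal_mul_diagonal, Matrix.trace_diagonal, Function.comp, pow_two]


/-- For any positive masses `m₁, m₂, m₃` and any `A > 0`, the symmetric matrix
`(3A/4)·[[μ₃₁+μ₃₂, -1, -1], [-1, μ₂₁+μ₂₃, -1], [-1, -1, μ₁₂+μ₁₃]]` (with
`μ_{i,j} = m_i/m_j`) has exactly one zero eigenvalue and two strictly positive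
eigenvalues. -/
theorem equilateral_hessian_eigenvalues (A m₁ m₂ m₃ : ℝ) (hA : 0 < A)
    (h₁ : 0 < m₁) (h₂ : 0 < m₂) (h₃ : 0 < m₃) :
    ∃ hB : (((3 * A / 4) • !![m₃ / m₁ + m₃ / m₂, -1, -1;
                             -1, m₂ / m₁ + m₂ / m₃, -1;
                             -1, -1, m₁ / m₂ + m₁ / m₃]) :
              Matrix (Fin 3) (Fin 3) ℝ).IsHermitian,
      ∃ i : Fin 3, hB.eigenvalues i = 0 ∧ ∀ j : Fin 3, j ≠ i → 0 < hB.eigenvalues j := by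
  set s := 3 * A / 4 with hs
  have hspos : 0 < s := by positivity
  set B : Matrix (Fin 3) (Fin 3) ℝ :=
    ((3 * A / 4) • !![m₃ / m₁ + m₃ / m₂, -1, -1;
                             -1, m₂ / m₁ + m₂ / m₃, -1;
                             -1, -1, m₁ / m₂ + m₁ / m₃]) with hBdef
  have hB : B.IsHermitian := by
    unfold Matrix.IsHermitian
    ext i j
    fin_cases i <;> fin_cases j <;> rfl
  refine ⟨hB, ?_⟩
  -- positive semidefiniteness
  have hPSD : B.PosSemidef := by
    refine Matrix.PosSemidef.of_dotProduct_mulVec_nonneg hB (fun x => ?_)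
    have key : ∀ a b y z : ℝ, 0 < a → 0 < b →
        0 ≤ (b / a) * y ^ 2 + (a / b) * z ^ 2 - 2 * (y * z) := by
      intro a b y z ha hb
      have h : (b / a) * y ^ 2 + (a / b) * z ^ 2 - 2 * (y * z)
          = (b * y - a * z) ^ 2 / (a * b) := by field_simp; ring
      rw [h]; positivity
    have k1 := key m₂ m₃ (x 0) (x 1) h₂ h₃
    have k2 := key m₁ m₃ (x 0) (x 2) h₁ h₃
    have k3 := key m₁ m₂ (x 1) (x 2) h₁ h₂
    simp only [hBdef, dotProduct, Matrix.mulVec, Matrix.smul_apply, Fin.sum_univ_three,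
      Pi.star_apply, star_trivial, Matrix.cons_val', Matrix.cons_val_zero, Matrix.cons_val_one,
      Matrix.head_cons, Matrix.head_fin_const, Matrix.of_apply, Matrix.cons_val_fin_one,
      Matrix.empty_val', smul_eq_mul, dotProduct, Matrix.cons_val_two, Matrix.tail_cons]
    nlinarith [k1, k2, k3, hspos]
  have hnn : ∀ i, 0 ≤ hB.eigenvalues i := hPSD.eigenvalues_nonneg
  -- determinant is zero
  have hdet : B.det = 0 := by
    have : (!![m₃ / m₁ + m₃ / m₂, -1, -1;
               -1, m₂ / m₁ + m₂ / m₃, -1;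
               -1, -1, m₁ / m₂ + m₁ / m₃] : Matrix (Fin 3) (Fin 3) ℝ).det = 0 := by
      rw [Matrix.det_fin_three]
      simp only [Matrix.cons_val', Matrix.cons_val_zero, Matrix.cons_val_one, Matrix.head_cons,
        Matrix.head_fin_const, Matrix.of_apply, Matrix.empty_val', Matrix.cons_val_fin_one,
        Matrix.cons_val_two, Matrix.tail_cons]
      field_simp
      ring
    rw [hBdef, Matrix.det_smul, this, mul_zero]
  have hprod : ∏ i, hB.eigenvalues i = 0 := by
    have := hB.det_eq_prod_eigenvalues
    rw [hdet] at this
    exact_mod_cast this.symm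
  obtain ⟨i, _, hi0⟩ := Finset.prod_eq_zero_iff.mp hprod
  refine ⟨i, hi0, ?_⟩
  -- the second elementary symmetric function of eigenvalues is positive
  set l : Fin 3 → ℝ := hB.eigenvalues with hl
  have hT : B.trace = l 0 + l 1 + l 2 := by
    rw [trace_eq_sum_eigs hB, Fin.sum_univ_three]
  have hS : (B * B).trace = l 0 ^ 2 + l 1 ^ 2 + l 2 ^ 2 := by
    rw [trace_sq_eq_sum_sq_eigs hB, Fin.sum_univ_three]
  have hTval : B.trace = s * ((m₃ / m₁ + m₃ / m₂) + (m₂ / m₁ + m₂ / m₃) + (m₁ / m₂ + m₁ / m₃)) := by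
    simp [hBdef, Matrix.trace_fin_three, Matrix.smul_apply, Matrix.cons_val_two,
      Matrix.tail_cons, Matrix.head_cons]
    ring
  have hSval : (B * B).trace = s ^ 2 * ((m₃ / m₁ + m₃ / m₂) ^ 2 + (m₂ / m₁ + m₂ / m₃) ^ 2
      + (m₁ / m₂ + m₁ / m₃) ^ 2 + 6) := by
    simp [hBdef, Matrix.trace_fin_three, Matrix.mul_apply, Fin.sum_univ_three,
      Matrix.smul_apply, Matrix.cons_val_two, Matrix.tail_cons, Matrix.head_cons]
    ring
  have habc : 3 < (m₃ / m₁ + m₃ / m₂) * (m₂ / m₁ + m₂ / m₃)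
      + (m₃ / m₁ + m₃ / m₂) * (m₁ / m₂ + m₁ / m₃)
      + (m₂ / m₁ + m₂ / m₃) * (m₁ / m₂ + m₁ / m₃) := by
    have e1 : (m₃ / m₁ + m₃ / m₂) * (m₂ / m₁ + m₂ / m₃)
        = m₂ * m₃ / m₁ ^ 2 + m₃ / m₁ + m₂ / m₁ + 1 := by field_simp; ring
    have e2 : (m₃ / m₁ + m₃ / m₂) * (m₁ / m₂ + m₁ / m₃)
        = m₁ * m₃ / m₂ ^ 2 + m₃ / m₂ + m₁ / m₂ + 1 := by field_simp; ring
    have e3 : (m₂ / m₁ + m₂ / m₃) * (m₁ / m₂ + m₁ / m₃)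
        = m₁ * m₂ / m₃ ^ 2 + m₂ / m₃ + m₁ / m₃ + 1 := by field_simp; ring
    rw [e1, e2, e3]
    have : 0 < m₂ * m₃ / m₁ ^ 2 := by positivity
    have : 0 < m₃ / m₁ := by positivity
    have : 0 < m₂ / m₁ := by positivity
    have : 0 < m₁ * m₃ / m₂ ^ 2 := by positivity
    have : 0 < m₃ / m₂ := by positivity
    have : 0 < m₁ / m₂ := by positivity
    have : 0 < m₁ * m₂ / m₃ ^ 2 := by positivity
    have : 0 < m₂ / m₃ := by positivity
    have : 0 < m₁ / m₃ := by positivity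
    linarith
  have he2 : 0 < l 0 * l 1 + l 0 * l 2 + l 1 * l 2 := by
    have h1 : B.trace ^ 2 - (B * B).trace = 2 * (l 0 * l 1 + l 0 * l 2 + l 1 * l 2) := by
      rw [hT, hS]; ring
    have h2 : 0 < B.trace ^ 2 - (B * B).trace := by
      rw [hTval, hSval]
      have : B.trace ^ 2 = s ^ 2 * ((m₃ / m₁ + m₃ / m₂) + (m₂ / m₁ + m₂ / m₃)
          + (m₁ / m₂ + m₁ / m₃)) ^ 2 := by rw [hTval]; ring
      nlinarith [habc, sq_nonneg s, mul_pos hspos hspos]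
    linarith
  intro j hj
  rcases lt_or_eq_of_le (hnn j) with h | h
  · exact h
  · exfalso
    have hj0 : l j = 0 := h.symm
    have hi0' : l i = 0 := hi0
    have hcases : ∀ a : Fin 3, a = 0 ∨ a = 1 ∨ a = 2 := by decide
    rcases hcases i with rfl | rfl | rfl <;> rcases hcases j with rfl | rfl | rfl <;>
      first
        | exact hj rfl
        | (simp only [hi0', hj0, mul_zero, zero_mul, add_zero, zero_add,
            lt_self_iff_false] at he2)
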